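/- On the interval [0, A], the function x ↦ Q(A−x) + Q(A+x) is monotonically increasing, where Q is the Gaussian tail function. -/

import Mathlib

open MeasureTheory Real

noncomputable def gaussPsi (x : ℝ) : ℝ := Real.exp (-x^2/2) / Real.sqrt (2 * Real.pi)

noncomputable def gaussQ (x : ℝ) : ℝ := ∫ z in Set.Ioi x, gaussPsi z

lemma gaussPsi_cont : Continuous gaussPsi := by
  unfold gaussPsi
  fun_prop

lemma gaussPsi_integrable : Integrable gaussPsi := by
  have h : Integrable (fun x : ℝ => Real.exp (-(1/2) * x^2)) :=
    integrable_exp_neg_mul_sq (by norm_num)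
  have h2 := h.div_const (Real.sqrt (2 * Real.pi))
  refine h2.congr ?_
  filter_upwards with x
  unfold gaussPsi
  ring_nf

lemma gaussQ_sub (a b : ℝ) (h : a ≤ b) :
    gaussQ a - gaussQ b = ∫ t in a..b, gaussPsi t := by
  rw [intervalIntegral.integral_of_le h]
  unfold gaussQ
  have hs : Set.Ioi a = Set.Ioc a b ∪ Set.Ioi b := (Set.Ioc_union_Ioi_eq_Ioi h).symm
  rw [hs, setIntegral_union (Set.Ioc_disjoint_Ioi le_rfl) measurableSet_Ioi
    gaussPsi_integrable.integrableOn gaussPsi_integrable.integrableOn]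
  ring

lemma gaussQ_eq (x : ℝ) : gaussQ x = gaussQ 0 - ∫ t in (0:ℝ)..x, gaussPsi t := by
  rcases le_total 0 x with h | h
  · have := gaussQ_sub 0 x h; linarith
  · have h1 := gaussQ_sub x 0 h
    rw [intervalIntegral.integral_symm] at h1
    linarith

lemma F_hasDerivAt (x : ℝ) :
    HasDerivAt (fun u => ∫ t in (0:ℝ)..u, gaussPsi t) (gaussPsi x) x :=
  intervalIntegral.integral_hasDerivAt_right
    (gaussPsi_cont.intervalIntegrable _ _)
    gaussPsi_cont.stronglyMeasurable.stronglyMeasurableAtFilter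
    gaussPsi_cont.continuousAt

lemma f_hasDerivAt (A x : ℝ) :
    HasDerivAt (fun x => gaussQ (A - x) + gaussQ (A + x))
      (gaussPsi (A - x) - gaussPsi (A + x)) x := by
  have h1 : HasDerivAt (fun x : ℝ => gaussQ (A - x))
      (gaussPsi (A - x)) x := by
    have hinner : HasDerivAt (fun x : ℝ => A - x) (-1) x := by
      simpa [Pi.sub_def] using (hasDerivAt_const x A).sub (hasDerivAt_id x)
    have := (HasDerivAt.comp x (F_hasDerivAt (A - x)) hinner).const_sub (gaussQ 0)
    have heq : (fun x : ℝ => gaussQ 0 - ∫ t in (0:ℝ)..(A - x), gaussPsi t)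
        = fun x : ℝ => gaussQ (A - x) := by
      funext y; rw [gaussQ_eq (A - y)]
    simp only [Function.comp_def] at this
    rw [heq] at this
    simpa using this
  have h2 : HasDerivAt (fun x : ℝ => gaussQ (A + x))
      (-gaussPsi (A + x)) x := by
    have hinner : HasDerivAt (fun x : ℝ => A + x) 1 x := by
      simpa [Pi.add_def] using (hasDerivAt_const x A).add (hasDerivAt_id x)
    have := (HasDerivAt.comp x (F_hasDerivAt (A + x)) hinner).const_sub (gaussQ 0)
    have heq : (fun x : ℝ => gaussQ 0 - ∫ t in (0:ℝ)..(A + x), gaussPsi t)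
        = fun x : ℝ => gaussQ (A + x) := by
      funext y; rw [gaussQ_eq (A + y)]
    simp only [Function.comp_def] at this
    rw [heq] at this
    simpa using this
  simpa [sub_eq_add_neg, Pi.add_def] using h1.add h2

theorem Q_sum_mono (A : ℝ) (hA : 0 < A) :
    MonotoneOn (fun x => gaussQ (A - x) + gaussQ (A + x)) (Set.Icc 0 A) := by
  have hdiff : ∀ x : ℝ, DifferentiableAt ℝ (fun x => gaussQ (A - x) + gaussQ (A + x)) x :=
    fun x => (f_hasDerivAt A x).differentiableAt
  apply monotoneOn_of_deriv_nonneg (convex_Icc 0 A)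
  · exact (fun x _ => (hdiff x).continuousAt.continuousWithinAt)
  · exact fun x _ => (hdiff x).differentiableWithinAt
  · intro x hx
    rw [interior_Icc] at hx
    rw [(f_hasDerivAt A x).deriv]
    have hle : gaussPsi (A + x) ≤ gaussPsi (A - x) := by
      unfold gaussPsi
      have hsqrt : 0 < Real.sqrt (2 * Real.pi) :=
        Real.sqrt_pos.mpr (by positivity)
      gcongr
      · linarith [hx.2]
      · linarith [hx.1]
    linarith
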